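/- arXiv:1505.01354 — 2 statements merged into one kernel-verified Lean document; each statement's English description precedes it below -/
import Mathlib

section
/- Fix vectors h₁,…,h_K ∈ ℂᴺ, unit-modulus phases e^{jφ₁},…,e^{jφ_K}, θ ∈ (0,π/2) and γᵢ > 0. Define, for precoders t₁,…,t_K ∈ ℂᴺ, the composite vector w = Σₖ tₖ e^{j(φₖ−φ₁)} and modified channels h̃ᵢ = hᵢ e^{j(φ₁−φᵢ)}. Then the optimal value of: minimize ‖Σₖ tₖ e^{j(φₖ−φ₁)}‖² over (t₁,…,t_K) subject to |Im(hᵢᵀ Σₖ tₖ e^{j(φₖ−φᵢ)})| ≤ (Re(hᵢᵀ Σₖ tₖ e^{j(φₖ−φᵢ)}) − γᵢ)tan θ for all i, equals the optimal value of: minimize ‖w‖² over w ∈ ℂᴺ subject to |Im(h̃ᵢᵀ w)| ≤ (Re(h̃ᵢᵀ w) − γᵢ)tan θ for all i. Moreover, if w* is optimal for the second problem, then tₖ* = (w*/K)·e^{j(φ₁−φₖ)} is optimal for the first. -/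
open Real Complex Finset

/-- Noiseless phase-rotated received symbol of user `i`:  `hᵢᵀ Σₖ tₖ e^{j(φₖ−φᵢ)}`. -/
noncomputable def rxSym {N K : ℕ} (h : Fin K → Fin N → ℂ) (φ : Fin K → ℝ)
    (t : Fin K → Fin N → ℂ) (i : Fin K) : ℂ :=
  ∑ j : Fin N, h i j * (∑ k : Fin K, Complex.exp (Complex.I * (φ k - φ i)) * t k j)

/-- Transmit-power objective  `‖Σₖ tₖ e^{j(φₖ−φ₁)}‖²` (phase reference user `i1`). -/
noncomputable def txPow {N K : ℕ} (φ : Fin K → ℝ) (i1 : Fin K)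
    (t : Fin K → Fin N → ℂ) : ℝ :=
  ∑ j : Fin N, ‖∑ k : Fin K, Complex.exp (Complex.I * (φ k - φ i1)) * t k j‖ ^ 2

theorem stmt_2 (N K : ℕ) (hK : 0 < K) (h : Fin K → Fin N → ℂ) (φ : Fin K → ℝ)
    (θ : ℝ) (hθ : θ ∈ Set.Ioo 0 (π / 2)) (γ : Fin K → ℝ) (hγ : ∀ i, 0 < γ i) :
    letI i1 : Fin K := ⟨0, hK⟩
    letI hmod : Fin K → Fin N → ℂ := fun i j => h i j * Complex.exp (Complex.I * (φ i1 - φ i))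
    letI BC : Set ℝ := { p | ∃ t : Fin K → Fin N → ℂ,
        (∀ i, |(rxSym h φ t i).im| ≤ ((rxSym h φ t i).re - γ i) * Real.tan θ) ∧
        p = txPow φ i1 t }
    letI MC : Set ℝ := { p | ∃ w : Fin N → ℂ,
        (∀ i, |(∑ j : Fin N, hmod i j * w j).im| ≤
              ((∑ j : Fin N, hmod i j * w j).re - γ i) * Real.tan θ) ∧
        p = ∑ j : Fin N, ‖w j‖ ^ 2 }
    sInf BC = sInf MC ∧
    ∀ w : Fin N → ℂ,
      IsLeast MC (∑ j : Fin N, ‖w j‖ ^ 2) →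
      (∀ i, |(∑ j : Fin N, hmod i j * w j).im| ≤
            ((∑ j : Fin N, hmod i j * w j).re - γ i) * Real.tan θ) →
      IsLeast BC (txPow φ i1
        (fun k j => (w j / (K : ℂ)) * Complex.exp (Complex.I * (φ i1 - φ k)))) := by
  beta_reduce
  set i1 : Fin K := ⟨0, hK⟩ with hi1
  set hmod : Fin K → Fin N → ℂ :=
    fun i j => h i j * Complex.exp (Complex.I * (φ i1 - φ i)) with hhmod
  set BC : Set ℝ := { p | ∃ t : Fin K → Fin N → ℂ,
      (∀ i, |(rxSym h φ t i).im| ≤ ((rxSym h φ t i).re - γ i) * Real.tan θ) ∧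
      p = txPow φ i1 t } with hBC
  set MC : Set ℝ := { p | ∃ w : Fin N → ℂ,
      (∀ i, |(∑ j : Fin N, hmod i j * w j).im| ≤
            ((∑ j : Fin N, hmod i j * w j).re - γ i) * Real.tan θ) ∧
      p = ∑ j : Fin N, ‖w j‖ ^ 2 } with hMC
  have hKC : (K : ℂ) ≠ 0 := Nat.cast_ne_zero.mpr hK.ne'
  have erot : ∀ a b c : ℝ,
      Complex.exp (Complex.I * (↑a - ↑b)) * Complex.exp (Complex.I * (↑b - ↑c))
        = Complex.exp (Complex.I * (↑a - ↑c)) := by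
    intro a b c; rw [← Complex.exp_add]; congr 1; ring
  -- composite vector of a precoder tuple
  set W : (Fin K → Fin N → ℂ) → (Fin N → ℂ) :=
    fun t j => ∑ k : Fin K, Complex.exp (Complex.I * (φ k - φ i1)) * t k j with hW
  have hrx : ∀ t i, rxSym h φ t i = ∑ j : Fin N, hmod i j * W t j := by
    intro t i
    unfold rxSym
    refine Finset.sum_congr rfl fun j _ => ?_
    simp only [hW, hmod, Finset.mul_sum, mul_assoc]
    refine Finset.sum_congr rfl fun k _ => ?_
    linear_combination h i j * t k j * (erot (φ k) (φ i1) (φ i)).symm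
  have hpow : ∀ t, txPow φ i1 t = ∑ j : Fin N, ‖W t j‖ ^ 2 := by
    intro t; rfl
  -- the reverse construction
  have hWt : ∀ w : Fin N → ℂ,
      W (fun k j => (w j / (K : ℂ)) * Complex.exp (Complex.I * (φ i1 - φ k))) = w := by
    intro w
    funext j
    simp only [hW]
    have : ∀ k : Fin K,
        Complex.exp (Complex.I * (↑(φ k) - ↑(φ i1))) *
          (w j / (K : ℂ) * Complex.exp (Complex.I * (↑(φ i1) - ↑(φ k)))) = w j / K := by
      intro k
      rw [mul_comm (w j / (K:ℂ)) _, ← mul_assoc, erot (φ k) (φ i1) (φ k)]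
      simp
    rw [Finset.sum_congr rfl fun k _ => this k, Finset.sum_const, Finset.card_univ,
      Fintype.card_fin, nsmul_eq_mul]
    field_simp
  have key : BC = MC := by
    ext p
    constructor
    · rintro ⟨t, hc, rfl⟩
      exact ⟨W t, fun i => by rw [← hrx]; exact hc i, hpow t⟩
    · rintro ⟨w, hc, rfl⟩
      refine ⟨fun k j => (w j / (K : ℂ)) * Complex.exp (Complex.I * (φ i1 - φ k)),
        fun i => ?_, ?_⟩
      · rw [hrx, hWt]; exact hc i
      · rw [hpow, hWt]
  refine ⟨by rw [key], fun w hle hfeas => ?_⟩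
  have hval : txPow φ i1
      (fun k j => (w j / (K : ℂ)) * Complex.exp (Complex.I * (φ i1 - φ k)))
      = ∑ j : Fin N, ‖w j‖ ^ 2 := by
    rw [hpow, hWt]
  rw [hval, key]
  exact hle
end

section
/- Let a, b ∈ ℝ, w₁, w₂ ∈ ℝⁿ, δ > 0, t > 0, c ≥ 0. The semi-infinite constraint: for all e ∈ ℝⁿ with ‖e‖ ≤ δ, |a + eᵀw₁| ≤ (b + eᵀw₂)·t − c, holds if and only if both a − b·t + δ‖w₁ − t·w₂‖ + c ≤ 0 and −a − b·t + δ‖w₁ + t·w₂‖ + c ≤ 0. -/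
open RealInnerProductSpace

lemma ball_sup_inner {n : ℕ} (v : EuclideanSpace ℝ (Fin n)) (δ K : ℝ) (hδ : 0 < δ) :
    (∀ e : EuclideanSpace ℝ (Fin n), ‖e‖ ≤ δ → ⟪e, v⟫ ≤ K) ↔ δ * ‖v‖ ≤ K := by
  constructor
  · intro h
    by_cases hv : v = 0
    · simpa [hv] using h 0 (by simp [le_of_lt hδ])
    · have hvn : (0:ℝ) < ‖v‖ := norm_pos_iff.mpr hv
      have := h ((δ / ‖v‖) • v) (by
        rw [norm_smul, Real.norm_eq_abs, abs_of_pos (div_pos hδ hvn),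
          div_mul_cancel₀ _ (ne_of_gt hvn)])
      rw [real_inner_smul_left, real_inner_self_eq_norm_sq] at this
      have heq : δ / ‖v‖ * ‖v‖ ^ 2 = δ * ‖v‖ := by
        field_simp
      linarith [heq ▸ this]
  · intro h e he
    calc ⟪e, v⟫ ≤ ‖e‖ * ‖v‖ := real_inner_le_norm e v
      _ ≤ δ * ‖v‖ := by gcongr
      _ ≤ K := h

theorem stmt_10 (n : ℕ) (a b : ℝ) (w₁ w₂ : EuclideanSpace ℝ (Fin n))
    (δ t c : ℝ) (hδ : 0 < δ) (ht : 0 < t) (hc : 0 ≤ c) :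
    (∀ e : EuclideanSpace ℝ (Fin n), ‖e‖ ≤ δ →
        |a + ⟪e, w₁⟫| ≤ (b + ⟪e, w₂⟫) * t - c) ↔
    (a - b * t + δ * ‖w₁ - t • w₂‖ + c ≤ 0 ∧
     -a - b * t + δ * ‖w₁ + t • w₂‖ + c ≤ 0) := by
  have key : ∀ e : EuclideanSpace ℝ (Fin n),
      (|a + ⟪e, w₁⟫| ≤ (b + ⟪e, w₂⟫) * t - c) ↔
      (⟪e, w₁ - t • w₂⟫ ≤ -(a - b * t + c) ∧ ⟪e, -(w₁ + t • w₂)⟫ ≤ -(-a - b * t + c)) := by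
    intro e
    rw [abs_le]
    rw [inner_sub_right, inner_neg_right, inner_add_right, real_inner_smul_right]
    constructor
    · rintro ⟨h1, h2⟩
      constructor <;> nlinarith [h1, h2]
    · rintro ⟨h1, h2⟩
      constructor <;> nlinarith [h1, h2]
  have h1 := ball_sup_inner (w₁ - t • w₂) δ (-(a - b * t + c)) hδ
  have h2 := ball_sup_inner (-(w₁ + t • w₂)) δ (-(-a - b * t + c)) hδ
  rw [norm_neg] at h2
  constructor
  · intro h
    have ha := h1.mp (fun e he => ((key e).mp (h e he)).1
    )
    have hb := h2.mp (fun e he => ((key e).mp (h e he)).2)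
    constructor <;> linarith
  · rintro ⟨hA, hB⟩ e he
    exact (key e).mpr ⟨h1.mpr (by linarith) e he, h2.mpr (by linarith) e he⟩
end
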